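/- Let S = ⟨n₁, n₂, n₃⟩ be a numerical semigroup minimally generated by n₁, n₂, n₃. For each i ∈ {1,2,3}, with {i,j,k} = {1,2,3}, let m_i = min{ m ∈ ℕ_{>0} : n_i ∣ m and m ∈ ⟨n_j, n_k⟩ }. Then m ∈ S has disconnected squarefree divisor complex Δ_m (i.e., Δ_m has at least two vertices and can be partitioned into two nonempty subcomplexes with no face meeting both) if and only if m ∈ {m₁, m₂, m₃}. -/

import Mathlib

open scoped Classical

/-- A numerical semigroup: a cofinite additive submonoid of ℕ. -/
def IsNumericalSemigroup (S : Set ℕ) : Prop :=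
  0 ∈ S ∧ (∀ a ∈ S, ∀ b ∈ S, a + b ∈ S) ∧ Sᶜ.Finite

/-- The set of nonnegative integer combinations of `n 0, …, n (d-1)`. -/
def genBy {d : ℕ} (n : Fin d → ℕ) : Set ℕ :=
  {m | ∃ a : Fin d → ℕ, m = ∑ i, a i * n i}

/-- `n` lists the (distinct) minimal generators of `S`: they generate `S` and each is
irreducible (nonzero and not a sum of two nonzero elements of `S`). -/
def IsMinGen {d : ℕ} (S : Set ℕ) (n : Fin d → ℕ) : Prop :=
  S = genBy n ∧ Function.Injective n ∧
    ∀ i, n i ≠ 0 ∧ ¬∃ a ∈ S, ∃ b ∈ S, a ≠ 0 ∧ b ≠ 0 ∧ n i = a + b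

/-- The squarefree divisor complex of `m` in `S` w.r.t. the generators `n`:
faces are the `F ⊆ [d]` with `m - ∑_{i ∈ F} n i ∈ S`. -/
def sdc {d : ℕ} (S : Set ℕ) (n : Fin d → ℕ) (m : ℕ) : Set (Finset (Fin d)) :=
  {F | ∃ s ∈ S, m = ∑ i ∈ F, n i + s}

/-- Euler characteristic of the squarefree divisor complex. -/
noncomputable def eulerChar {d : ℕ} (S : Set ℕ) (n : Fin d → ℕ) (m : ℕ) : ℤ :=
  ∑ F : Finset (Fin d), if F ∈ sdc S n m then (-1 : ℤ) ^ F.card else 0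

/-- The set of pseudo-Frobenius numbers of `S` (as integers). -/
def PF (S : Set ℕ) : Set ℤ :=
  {x | (¬∃ y ∈ S, (y : ℤ) = x) ∧ ∀ s ∈ S, s ≠ 0 → ∃ y ∈ S, (y : ℤ) = x + s}

/-- A simplicial complex is disconnected if its vertices split into two nonempty parts with
no face meeting both. -/
def SDCDisconnected {d : ℕ} (Δ : Set (Finset (Fin d))) : Prop :=
  ∃ U : Set (Fin d), (∃ i ∈ U, ({i} : Finset (Fin d)) ∈ Δ) ∧
    (∃ i ∉ U, ({i} : Finset (Fin d)) ∈ Δ) ∧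
    ∀ F ∈ Δ, (∀ x ∈ F, x ∈ U) ∨ (∀ x ∈ F, x ∉ U)

section Helpers
variable {d : ℕ}

lemma sum_bump (n a : Fin d → ℕ) (l : Fin d) :
    ∑ t, Function.update a l (a l + 1) t * n t = n l + ∑ t, a t * n t := by
  rw [← Finset.add_sum_erase _ (fun t => Function.update a l (a l + 1) t * n t) (Finset.mem_univ l),
      ← Finset.add_sum_erase _ (fun t => a t * n t) (Finset.mem_univ l)]
  have h1 : ∀ t ∈ Finset.univ.erase l, Function.update a l (a l + 1) t * n t = a t * n t := by
    intro t ht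
    rw [Function.update_of_ne (Finset.ne_of_mem_erase ht)]
  rw [Finset.sum_congr rfl h1, Function.update_self]
  ring

lemma sum_extract (n a : Fin d → ℕ) (l : Fin d) (h : 1 ≤ a l) :
    ∑ t, a t * n t = n l + ∑ t, Function.update a l (a l - 1) t * n t := by
  have h2 := sum_bump n (Function.update a l (a l - 1)) l
  rw [Function.update_self, Function.update_idem, Nat.sub_add_cancel h, Function.update_eq_self] at h2
  exact h2

lemma sum_single_coeff (n : Fin d → ℕ) (l : Fin d) (c : ℕ) :
    ∑ t, (if t = l then c else 0) * n t = c * n l := by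
  rw [Finset.sum_eq_single l]
  · simp
  · intro t _ ht; simp [ht]
  · intro h; exact absurd (Finset.mem_univ l) h

lemma sum_split_at (n a : Fin d → ℕ) (i : Fin d) :
    ∑ t, a t * n t = a i * n i + ∑ t, (if t = i then 0 else a t) * n t := by
  have key : ∀ t, a t * n t = (if t = i then a i else 0) * n t + (if t = i then 0 else a t) * n t := by
    intro t; by_cases h : t = i <;> simp [h]
  rw [Finset.sum_congr rfl (fun t _ => key t), Finset.sum_add_distrib, sum_single_coeff]

end Helpers


/-- For a 3-generated numerical semigroup, `Δ_m` is disconnected iff `m` is one of the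
three elements `mᵢ = min{m > 0 : nᵢ ∣ m and m ∈ ⟨n_j, n_k⟩}`. -/
theorem sdc_disconnected_iff {S : Set ℕ} {n : Fin 3 → ℕ}
    (hS : IsNumericalSemigroup S) (hmin : IsMinGen S n) (m : ℕ) (hm : m ∈ S) :
    SDCDisconnected (sdc S n m) ↔
      ∃ i : Fin 3, m = sInf {x : ℕ | 0 < x ∧ n i ∣ x ∧
        ∃ a : Fin 3 → ℕ, a i = 0 ∧ x = ∑ l, a l * n l} := by
  obtain ⟨hgen, hinj, hirr⟩ := hmin
  obtain ⟨hS0, hSadd, -⟩ := hS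
  have hmemS : ∀ x, x ∈ S ↔ ∃ a : Fin 3 → ℕ, x = ∑ t, a t * n t := by
    intro x; rw [hgen]; rfl
  have hne : ∀ l, n l ≠ 0 := fun l => (hirr l).1
  have npos : ∀ l, 0 < n l := fun l => Nat.pos_of_ne_zero (hne l)
  have hcS : ∀ (c : ℕ) (l : Fin 3), c * n l ∈ S := by
    intro c l
    rw [hmemS]
    exact ⟨fun t => if t = l then c else 0, (sum_single_coeff n l c).symm⟩
  have hnS : ∀ l, n l ∈ S := by
    intro l; have := hcS 1 l; simpa using this
  have hsing : ∀ (l : Fin 3) (s : ℕ), s ∈ S → m = n l + s →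
      ({l} : Finset (Fin 3)) ∈ sdc S n m := by
    intro l s hs he
    exact ⟨s, hs, by simpa using he⟩
  have hsing' : ∀ l : Fin 3, ({l} : Finset (Fin 3)) ∈ sdc S n m → ∃ s ∈ S, m = n l + s := by
    rintro l ⟨s, hs, he⟩
    exact ⟨s, hs, by simpa using he⟩
  have hpair : ∀ (i l : Fin 3) (s : ℕ), i ≠ l → s ∈ S → m = n i + n l + s →
      ({i, l} : Finset (Fin 3)) ∈ sdc S n m := by
    intro i l s hil hs he
    refine ⟨s, hs, ?_⟩
    rw [Finset.sum_pair hil]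
    omega
  have hpair' : ∀ i l : Fin 3, i ≠ l → ({i, l} : Finset (Fin 3)) ∈ sdc S n m →
      ∃ s ∈ S, m = n i + n l + s := by
    rintro i l hil ⟨s, hs, he⟩
    rw [Finset.sum_pair hil] at he
    exact ⟨s, hs, by omega⟩
  have hsumS : ∀ F : Finset (Fin 3), ∑ t ∈ F, n t ∈ S := by
    intro F
    induction F using Finset.induction_on with
    | empty => simpa using hS0
    | insert _ _ h ih => rw [Finset.sum_insert h]; exact hSadd _ (hnS _) _ ih
  have hmono : ∀ (F F' : Finset (Fin 3)), F' ⊆ F → F ∈ sdc S n m → F' ∈ sdc S n m := by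
    rintro F F' hsub ⟨s, hs, he⟩
    refine ⟨∑ t ∈ F \ F', n t + s, hSadd _ (hsumS _) _ hs, ?_⟩
    rw [← Finset.sum_sdiff hsub] at he
    omega
  have hexl : ∀ (a : Fin 3 → ℕ) (i : Fin 3), a i = 0 → 0 < ∑ t, a t * n t →
      ∃ l, l ≠ i ∧ 1 ≤ a l := by
    intro a i hai hpos
    by_contra hc
    push_neg at hc
    have hz : ∀ t, a t = 0 := by
      intro t
      by_cases h : t = i
      · rw [h]; exact hai
      · have := hc t h; omega
    rw [Finset.sum_eq_zero (fun t _ => by rw [hz t, Nat.zero_mul])] at hpos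
    omega
  let T : Fin 3 → Set ℕ := fun i => {x : ℕ | 0 < x ∧ n i ∣ x ∧
      ∃ a : Fin 3 → ℕ, a i = 0 ∧ x = ∑ l, a l * n l}
  have hTmem : ∀ (i : Fin 3) (x : ℕ), x ∈ T i ↔ (0 < x ∧ n i ∣ x ∧
      ∃ a : Fin 3 → ℕ, a i = 0 ∧ x = ∑ l, a l * n l) := fun i x => Iff.rfl
  have hTne : ∀ i : Fin 3, (T i).Nonempty := by
    intro i
    have hii : i + 1 ≠ i := by fin_cases i <;> decide
    refine ⟨n i * n (i + 1), (hTmem _ _).mpr ⟨Nat.mul_pos (npos i) (npos (i+1)),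
      dvd_mul_right _ _, fun t => if t = i + 1 then n i else 0, ?_, ?_⟩⟩
    · show (if i = i + 1 then n i else 0) = 0
      rw [if_neg (Ne.symm hii)]
    · exact (sum_single_coeff n (i+1) (n i)).symm
  show SDCDisconnected (sdc S n m) ↔ ∃ i, m = sInf (T i)
  constructor
  · -- forward direction
    rintro ⟨U, ⟨i₀, hi₀U, hi₀v⟩, ⟨i₁, hi₁U, hi₁v⟩, hsep⟩
    have hkey : ∃ i : Fin 3, ({i} : Finset (Fin 3)) ∈ sdc S n m ∧
        (∃ l, l ≠ i ∧ ({l} : Finset (Fin 3)) ∈ sdc S n m) ∧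
        ∀ l, l ≠ i → ({i, l} : Finset (Fin 3)) ∉ sdc S n m := by
      by_cases h0 : ∃ v, v ≠ i₀ ∧ v ∈ U ∧ ({v} : Finset (Fin 3)) ∈ sdc S n m
      · by_cases h1 : ∃ w, w ≠ i₁ ∧ w ∉ U ∧ ({w} : Finset (Fin 3)) ∈ sdc S n m
        · exfalso
          obtain ⟨v, hv0, hvU, hvv⟩ := h0
          obtain ⟨w, hw1, hwU, hwv⟩ := h1
          have d1 : i₀ ≠ i₁ := fun h => hi₁U (by rw [← h]; exact hi₀U)
          have d2 : i₀ ≠ w := fun h => hwU (by rw [← h]; exact hi₀U)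
          have d3 : v ≠ i₁ := fun h => hi₁U (by rw [← h]; exact hvU)
          have d4 : v ≠ w := fun h => hwU (by rw [← h]; exact hvU)
          have e1 : i₀.val ≠ i₁.val := fun h => d1 (Fin.ext h)
          have e2 : i₀.val ≠ w.val := fun h => d2 (Fin.ext h)
          have e3 : v.val ≠ i₁.val := fun h => d3 (Fin.ext h)
          have e4 : v.val ≠ w.val := fun h => d4 (Fin.ext h)
          have e5 : v.val ≠ i₀.val := fun h => hv0 (Fin.ext h)
          have e6 : w.val ≠ i₁.val := fun h => hw1 (Fin.ext h)
          have := i₀.isLt; have := i₁.isLt; have := v.isLt; have := w.isLt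
          omega
        · push_neg at h1
          refine ⟨i₁, hi₁v, ⟨i₀, fun h => hi₁U (by rw [h] at hi₀U; exact hi₀U), hi₀v⟩, ?_⟩
          intro l hl hmem
          have hlv : ({l} : Finset (Fin 3)) ∈ sdc S n m := hmono _ _ (by simp) hmem
          rcases hsep _ hmem with hin | hout
          · exact hi₁U (hin i₁ (by simp))
          · exact (h1 l hl (hout l (by simp))) hlv
      · push_neg at h0
        refine ⟨i₀, hi₀v, ⟨i₁, fun h => (by rw [h] at hi₁U; exact hi₁U hi₀U), hi₁v⟩, ?_⟩
        intro l hl hmem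
        have hlv : ({l} : Finset (Fin 3)) ∈ sdc S n m := hmono _ _ (by simp) hmem
        rcases hsep _ hmem with hin | hout
        · exact (h0 l hl (hin l (by simp))) hlv
        · exact (hout i₀ (by simp)) hi₀U
    obtain ⟨i, hiv, ⟨l₀, hl₀i, hl₀v⟩, hno⟩ := hkey
    obtain ⟨s, hsS, hse⟩ := hsing' i hiv
    obtain ⟨a', ha'⟩ := (hmemS s).mp hsS
    have ha'0 : ∀ l, l ≠ i → a' l = 0 := by
      intro l hl
      by_contra hne0
      have hext := sum_extract n a' l (by omega)
      refine hno l hl (hpair i l (∑ t, Function.update a' l (a' l - 1) t * n t)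
        (Ne.symm hl) ((hmemS _).mpr ⟨_, rfl⟩) ?_)
      rw [hse, ha', hext]
      omega
    have hs_eq : s = a' i * n i := by
      rw [ha', sum_split_at n a' i]
      have hz : ∑ t, (if t = i then 0 else a' t) * n t = 0 :=
        Finset.sum_eq_zero (fun t _ => by
          by_cases h : t = i
          · simp [h]
          · simp [h, ha'0 t h])
      rw [hz, add_zero]
    have hC : m = (1 + a' i) * n i := by rw [hse, hs_eq]; ring
    set C := 1 + a' i with hCdef
    obtain ⟨s₂, hs₂S, hse₂⟩ := hsing' l₀ hl₀v
    obtain ⟨b, hb⟩ := (hmemS s₂).mp hs₂S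
    have hbi : b i = 0 := by
      by_contra hne0
      have hext := sum_extract n b i (by omega)
      refine hno l₀ hl₀i (hpair i l₀ (∑ t, Function.update b i (b i - 1) t * n t)
        (Ne.symm hl₀i) ((hmemS _).mpr ⟨_, rfl⟩) ?_)
      rw [hse₂, hb, hext]
      omega
    have hmT : m ∈ T i := by
      refine (hTmem _ _).mpr ⟨by rw [hC]; exact Nat.mul_pos (by omega) (npos i),
        by rw [hC]; exact dvd_mul_left _ _,
        Function.update b l₀ (b l₀ + 1), ?_, ?_⟩
      · rw [Function.update_of_ne (Ne.symm hl₀i)]; exact hbi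
      · rw [sum_bump n b l₀, hse₂, hb]
    refine ⟨i, le_antisymm (le_csInf ⟨m, hmT⟩ ?_) (Nat.sInf_le hmT)⟩
    intro x hx
    obtain ⟨hxpos, ⟨c, hc⟩, e, hei, hxe⟩ := (hTmem _ _).mp hx
    rw [mul_comm] at hc
    by_contra hlt
    push_neg at hlt
    obtain ⟨l, hli, hel⟩ := hexl e i hei (by rw [← hxe]; exact hxpos)
    have hcC : c < C := by
      have hni := npos i
      exact Nat.lt_of_mul_lt_mul_right (show c * n i < C * n i by omega)
    set s₃ := ∑ t, Function.update e l (e l - 1) t * n t with hs₃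
    have hext : ∑ t, e t * n t = n l + s₃ := sum_extract n e l hel
    have hs₃S : s₃ ∈ S := (hmemS _).mpr ⟨_, hs₃⟩
    apply hno l hli
    apply hpair i l ((C - c - 1) * n i + s₃) (Ne.symm hli)
      (hSadd _ (hcS (C - c - 1) i) _ hs₃S)
    have hmul1 : c * n i ≤ C * n i := Nat.mul_le_mul_right _ (le_of_lt hcC)
    have h1 : C * n i = (C - c) * n i + c * n i := by rw [Nat.sub_mul]; omega
    have hni2 : n i ≤ (C - c) * n i := Nat.le_mul_of_pos_left _ (by omega)
    have h2 : (C - c) * n i = n i + (C - c - 1) * n i := by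
      rw [Nat.sub_mul (C - c) 1, one_mul]; omega
    rw [hC]
    omega
  · -- backward direction
    rintro ⟨i, hmi⟩
    have hmem := Nat.sInf_mem (hTne i)
    rw [← hmi] at hmem
    obtain ⟨hmpos, ⟨C, hC⟩, a, hai, hmrep⟩ := (hTmem _ _).mp hmem
    rw [mul_comm] at hC
    have hCne : C ≠ 0 := by rintro rfl; simp at hC; omega
    have hC2 : 2 ≤ C := by
      rcases Nat.lt_or_ge C 2 with h | h
      · exfalso
        have hC1 : C = 1 := by omega
        subst hC1
        rw [one_mul] at hC
        obtain ⟨l, hli, hal⟩ := hexl a i hai (by rw [← hmrep]; exact hmpos)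
        have hext := sum_extract n a l hal
        rw [← hmrep, hC] at hext
        set s' := ∑ t, Function.update a l (a l - 1) t * n t with hs'
        have hs'S : s' ∈ S := (hmemS s').mpr ⟨_, hs'⟩
        rcases Nat.eq_zero_or_pos s' with h0 | hp
        · rw [h0, add_zero] at hext
          exact hli (hinj hext).symm
        · exact (hirr i).2 ⟨n l, hnS l, s', hs'S, hne l, Nat.pos_iff_ne_zero.mp hp, hext⟩
      · exact h
    refine ⟨{i}, ⟨i, rfl, ?_⟩, ?_, ?_⟩
    · refine hsing i ((C - 1) * n i) (hcS _ _) ?_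
      have hle : n i ≤ C * n i := Nat.le_mul_of_pos_left _ (by omega)
      rw [hC, Nat.sub_mul, one_mul]
      omega
    · obtain ⟨l, hli, hal⟩ := hexl a i hai (by rw [← hmrep]; exact hmpos)
      refine ⟨l, by simpa using hli, ?_⟩
      exact hsing l _ ((hmemS _).mpr ⟨_, rfl⟩) (by rw [hmrep]; exact sum_extract n a l hal)
    · intro F hF
      by_cases hiF : i ∈ F
      · left
        intro x hxF
        by_contra hxi
        have hxi' : x ≠ i := by simpa using hxi
        have hpairF : ({i, x} : Finset (Fin 3)) ∈ sdc S n m := by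
          apply hmono F _ _ hF
          intro t ht
          simp only [Finset.mem_insert, Finset.mem_singleton] at ht
          rcases ht with rfl | rfl
          · exact hiF
          · exact hxF
        obtain ⟨s, hsS, hse⟩ := hpair' i x (Ne.symm hxi') hpairF
        obtain ⟨α, hα⟩ := (hmemS s).mp hsS
        rw [hα, sum_split_at n α i] at hse
        set e : Fin 3 → ℕ := fun t => if t = i then 0 else α t with he
        set Se := ∑ t, e t * n t with hSe
        -- hse : m = n i + n x + (α i * n i + Se)
        have hnx := npos x
        have hni := npos i
        have hlt : (1 + α i) * n i < C * n i := by
          rw [add_mul, one_mul]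
          omega
        have hCgt : 1 + α i < C := Nat.lt_of_mul_lt_mul_right hlt
        have hmul1 : (1 + α i) * n i ≤ C * n i := le_of_lt hlt
        have hsub : (C - (1 + α i)) * n i = n x + Se := by
          rw [Nat.sub_mul, add_mul, one_mul]
          omega
        have hx'T : (C - (1 + α i)) * n i ∈ T i := by
          refine (hTmem _ _).mpr ⟨Nat.mul_pos (by omega) hni, dvd_mul_left _ _,
            Function.update e x (e x + 1), ?_, ?_⟩
          · rw [Function.update_of_ne (Ne.symm hxi')]
            simp [he]
          · rw [sum_bump n e x, hsub, ← hSe]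
        have hle := Nat.sInf_le hx'T
        rw [← hmi] at hle
        have hApos : 0 < (1 + α i) * n i := Nat.mul_pos (by omega) hni
        omega
      · right
        intro x hxF hxU
        have : x = i := by simpa using hxU
        rw [this] at hxF
        exact hiF hxF
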